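/- Under the quasi-static setup with cos θᵢ ≠ 0, cos φᵢ ≠ 0, tan θ₁ ≠ tan θ₂, suppose additionally t₂z - t₁z = t₀ sin θ₀ (vertical cable-force difference in the planar quasi-static configuration). Define the estimated separated thrust uncertainties Δf̂₁ = (Δ̂ₓ - Δ̂z tan θ₂)/((cos θ₁ tan θ₂ - sin θ₁) cos φ₁) and Δf̂₂ = (Δ̂ₓ - Δ̂z tan θ₁)/((cos θ₂ tan θ₁ - sin θ₂) cos φ₂), and the vertical cable force estimates t̂ᵢz = mᵢ d̂ᵢz + Δf̂ᵢ cos θᵢ cos φᵢ. Then the estimated force-consensus error decomposes as t̂₂z - t̂₁z = t₀ sin θ₀ + C·(d̃₁ₓ, d̃₁y, d̃₁z, d̃₂ₓ, d̃₂y, d̃₂z), where C is the row vector (−2m₁/(tan θ₂ − tan θ₁), 0, 2m₁ tan θ₁/(tan θ₂ − tan θ₁), −2m₂/(tan θ₂ − tan θ₁), 0, 2m₂ tan θ₂/(tan θ₂ − tan θ₁)). -/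

import Mathlib

/-- Decomposition of the estimated vertical force-consensus
error: with the separated thrust-uncertainty estimates `Δf̂ᵢ` and the vertical
cable force estimates `t̂ᵢz = mᵢ d̂ᵢz + Δf̂ᵢ cos θᵢ cos φᵢ`, one has
`t̂₂z - t̂₁z = t₀ sin θ₀ + C ⬝ (d̃₁ₓ, d̃₁y, d̃₁z, d̃₂ₓ, d̃₂y, d̃₂z)`. -/
theorem stmt_10 (m₀ m₁ m₂ g : ℝ) (hm₀ : 0 < m₀) (hm₁ : 0 < m₁) (hm₂ : 0 < m₂) (hg : 0 < g)
    (θ₁ θ₂ φ₁ φ₂ t₀ θ₀ : ℝ)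
    (hθ₁ : Real.cos θ₁ ≠ 0) (hθ₂ : Real.cos θ₂ ≠ 0)
    (hφ₁ : Real.cos φ₁ ≠ 0) (hφ₂ : Real.cos φ₂ ≠ 0)
    (htan : Real.tan θ₁ ≠ Real.tan θ₂)
    (Δf₁ Δf₂ t1x t2x t1z t2z dhat1x dhat1z dhat2x dhat2z : ℝ)
    (dtil1x dtil1y dtil1z dtil2x dtil2y dtil2z : ℝ)
    (hbalx : t1x + t2x = 0) (hbalz : t1z + t2z = m₀ * g)
    (hest1x : m₁ * dhat1x = -Δf₁ * Real.sin θ₁ * Real.cos φ₁ + t1x + m₁ * dtil1x)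
    (hest1z : m₁ * dhat1z = -Δf₁ * Real.cos θ₁ * Real.cos φ₁ + t1z + m₁ * dtil1z)
    (hest2x : m₂ * dhat2x = -Δf₂ * Real.sin θ₂ * Real.cos φ₂ + t2x + m₂ * dtil2x)
    (hest2z : m₂ * dhat2z = -Δf₂ * Real.cos θ₂ * Real.cos φ₂ + t2z + m₂ * dtil2z)
    (hforce : t2z - t1z = t₀ * Real.sin θ₀)
    (Δhatx Δhatz : ℝ)
    (hΔhatx : Δhatx = m₁ * dhat1x + m₂ * dhat2x)
    (hΔhatz : Δhatz = m₁ * dhat1z + m₂ * dhat2z - m₀ * g)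
    (Δfhat₁ Δfhat₂ that1z that2z : ℝ)
    (hΔfhat₁ : Δfhat₁ = (Δhatx - Δhatz * Real.tan θ₂)
        / ((Real.cos θ₁ * Real.tan θ₂ - Real.sin θ₁) * Real.cos φ₁))
    (hΔfhat₂ : Δfhat₂ = (Δhatx - Δhatz * Real.tan θ₁)
        / ((Real.cos θ₂ * Real.tan θ₁ - Real.sin θ₂) * Real.cos φ₂))
    (hthat1z : that1z = m₁ * dhat1z + Δfhat₁ * Real.cos θ₁ * Real.cos φ₁)
    (hthat2z : that2z = m₂ * dhat2z + Δfhat₂ * Real.cos θ₂ * Real.cos φ₂) :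
    that2z - that1z = t₀ * Real.sin θ₀
      + dotProduct
          ![-2*m₁ / (Real.tan θ₂ - Real.tan θ₁), 0,
            2*m₁*Real.tan θ₁ / (Real.tan θ₂ - Real.tan θ₁),
            -2*m₂ / (Real.tan θ₂ - Real.tan θ₁), 0,
            2*m₂*Real.tan θ₂ / (Real.tan θ₂ - Real.tan θ₁)]
          ![dtil1x, dtil1y, dtil1z, dtil2x, dtil2y, dtil2z] := by
  have hsub : Real.tan θ₂ - Real.tan θ₁ ≠ 0 := sub_ne_zero.mpr (Ne.symm htan)
  have hs1 : Real.sin θ₁ = Real.tan θ₁ * Real.cos θ₁ := by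
    rw [Real.tan_eq_sin_div_cos]; field_simp
  have hs2 : Real.sin θ₂ = Real.tan θ₂ * Real.cos θ₂ := by
    rw [Real.tan_eq_sin_div_cos]; field_simp
  set T₁ := Real.tan θ₁
  set T₂ := Real.tan θ₂
  set c₁ := Real.cos θ₁
  set c₂ := Real.cos θ₂
  set p₁ := Real.cos φ₁
  set p₂ := Real.cos φ₂
  rw [hs1] at hest1x hΔfhat₁
  rw [hs2] at hest2x hΔfhat₂
  set Ex := m₁ * dtil1x + m₂ * dtil2x with hEx
  set Ez := m₁ * dtil1z + m₂ * dtil2z with hEz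
  have hA : Δhatx = -Δf₁ * (T₁ * c₁) * p₁ - Δf₂ * (T₂ * c₂) * p₂ + Ex := by
    rw [hΔhatx, hest1x, hest2x, hEx]; linarith
  have hB : Δhatz = -Δf₁ * c₁ * p₁ - Δf₂ * c₂ * p₂ + Ez := by
    rw [hΔhatz, hest1z, hest2z, hEz]; linarith
  have e1 : Δfhat₁ * (c₁ * p₁) = Δf₁ * (c₁ * p₁) + (Ex - Ez * T₂) / (T₂ - T₁) := by
    rw [hΔfhat₁]
    rw [show (c₁ * T₂ - T₁ * c₁) * p₁ = c₁ * p₁ * (T₂ - T₁) by ring]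
    rw [div_mul_eq_mul_div, mul_comm (Δhatx - Δhatz * T₂) (c₁ * p₁),
      mul_div_mul_left _ _ (mul_ne_zero hθ₁ hφ₁)]
    rw [show Δhatx - Δhatz * T₂ = Δf₁ * (c₁ * p₁) * (T₂ - T₁) + (Ex - Ez * T₂) by
      rw [hA, hB]; ring]
    rw [add_div, mul_div_assoc, div_self hsub, mul_one]
  have hsub' : T₁ - T₂ ≠ 0 := sub_ne_zero.mpr htan
  have e2 : Δfhat₂ * (c₂ * p₂) = Δf₂ * (c₂ * p₂) + (Ex - Ez * T₁) / (T₁ - T₂) := by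
    rw [hΔfhat₂]
    rw [show (c₂ * T₁ - T₂ * c₂) * p₂ = c₂ * p₂ * (T₁ - T₂) by ring]
    rw [div_mul_eq_mul_div, mul_comm (Δhatx - Δhatz * T₁) (c₂ * p₂),
      mul_div_mul_left _ _ (mul_ne_zero hθ₂ hφ₂)]
    rw [show Δhatx - Δhatz * T₁ = Δf₂ * (c₂ * p₂) * (T₁ - T₂) + (Ex - Ez * T₁) by
      rw [hA, hB]; ring]
    rw [add_div, mul_div_assoc, div_self hsub', mul_one]
  have h1 : that1z = t1z + m₁ * dtil1z + (Ex - Ez * T₂) / (T₂ - T₁) := by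
    rw [hthat1z, hest1z, show Δfhat₁ * c₁ * p₁ = Δfhat₁ * (c₁ * p₁) by ring, e1]
    ring
  have h2 : that2z = t2z + m₂ * dtil2z + (Ex - Ez * T₁) / (T₁ - T₂) := by
    rw [hthat2z, hest2z, show Δfhat₂ * c₂ * p₂ = Δfhat₂ * (c₂ * p₂) by ring, e2]
    ring
  have hforce' : t2z = t1z + t₀ * Real.sin θ₀ := by linarith
  rw [h1, h2, hEx, hEz, hforce']
  simp only [Matrix.cons_dotProduct, Matrix.dotProduct_of_isEmpty, Matrix.head_cons, Matrix.tail_cons]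
  field_simp
  ring
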